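/- arXiv:1402.5890 — 2 statements merged into one kernel-verified Lean document; each statement's English description precedes it below -/
import Mathlib

section
/- The n×n matrix D° (with diagonal entries (2n−1)/2 for i<n and (n−1)/2 for i=n, and off-diagonals (1/2)√(i(2n−i))) is similar to A(n) via S·D° = A(n)·S, where S is the upper bidiagonal matrix with s_{ii} = √(2n−i) for i=1,…,n−1, s_{nn} = √(2n), s_{i,i+1} = −√i for i=1,…,n−1, and all other entries zero; moreover S is invertible. -/
/-- The 1-indexed off-diagonal entries of the matrix `A(n)`. -/
noncomputable def offA (n k : ℕ) : ℝ :=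
  if k = n - 1 then Real.sqrt (n * (n - 1) / 2)
  else (1 / 2) * Real.sqrt (k * (2 * n - k - 1))

/-- The matrix `A(n)`: symmetric tridiagonal, diagonal `n-1`,
super/sub-diagonal `offA n k` at (1-indexed) position `(k, k+1)`. -/
noncomputable def Amat (n : ℕ) : Matrix (Fin n) (Fin n) ℝ :=
  Matrix.of fun i j =>
    if (i : ℕ) = (j : ℕ) then (n : ℝ) - 1
    else if (i : ℕ) + 1 = (j : ℕ) then offA n ((i : ℕ) + 1)
    else if (j : ℕ) + 1 = (i : ℕ) then offA n ((j : ℕ) + 1)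
    else 0

/-- The `n × n` symmetric tridiagonal matrix `D°` with diagonal `(2n-1)/2`
(except `(n-1)/2` in the last position) and off-diagonal `(1/2)√(k(2n-k))`
at (1-indexed) position `(k, k+1)`. -/
noncomputable def Dsub (n : ℕ) : Matrix (Fin n) (Fin n) ℝ :=
  Matrix.of fun i j =>
    if (i : ℕ) = (j : ℕ) then
      (if (i : ℕ) + 1 < n then (2 * (n : ℝ) - 1) / 2 else ((n : ℝ) - 1) / 2)
    else if (i : ℕ) + 1 = (j : ℕ) then (1 / 2) * Real.sqrt ((i + 1) * (2 * n - i - 1))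
    else if (j : ℕ) + 1 = (i : ℕ) then (1 / 2) * Real.sqrt ((j + 1) * (2 * n - j - 1))
    else 0

/-- The upper bidiagonal matrix `S` (1-indexed): `s_{II} = √(2n-I)` for `I ≤ n-1`,
`s_{nn} = √(2n)`, `s_{I,I+1} = -√I` for `I ≤ n-1`, all other entries zero. -/
noncomputable def Smat (n : ℕ) : Matrix (Fin n) (Fin n) ℝ :=
  Matrix.of fun i j =>
    if (i : ℕ) = (j : ℕ) then
      (if (i : ℕ) + 1 < n then Real.sqrt (2 * n - i - 1) else Real.sqrt (2 * n))
    else if (i : ℕ) + 1 = (j : ℕ) then -Real.sqrt (i + 1)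
    else 0

section Helpers

lemma sum_two' {n : ℕ} (f : Fin n → ℝ) (a b : Fin n) (hab : a ≠ b)
    (h : ∀ k, k ≠ a → k ≠ b → f k = 0) : ∑ k, f k = f a + f b := by
  rw [← Finset.sum_subset (Finset.subset_univ {a, b})]
  · rw [Finset.sum_pair hab]
  · intro k _ hk
    simp only [Finset.mem_insert, Finset.mem_singleton, not_or] at hk
    exact h k hk.1 hk.2

lemma sum_one' {n : ℕ} (f : Fin n → ℝ) (a : Fin n)
    (h : ∀ k, k ≠ a → f k = 0) : ∑ k, f k = f a :=
  Finset.sum_eq_single a (fun k _ hk => h k hk) (by simp)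

lemma mul_sqrt' (c x : ℝ) (hc : 0 ≤ c) : c * Real.sqrt x = Real.sqrt (c^2 * x) := by
  rw [Real.sqrt_mul (by positivity), Real.sqrt_sq hc]

lemma sqrt_mul_sqrt (a b : ℝ) (ha : 0 ≤ a) :
    Real.sqrt a * Real.sqrt b = Real.sqrt (a * b) := (Real.sqrt_mul ha b).symm

lemma sqrt_prod_eq' (a b c d e : ℝ) (ha : 0 ≤ a) (hc : 0 ≤ c) (he : 0 ≤ e)
    (h : a * b = e^2 * (c * d)) : Real.sqrt a * Real.sqrt b = e * (Real.sqrt c * Real.sqrt d) := by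
  rw [sqrt_mul_sqrt a b ha, sqrt_mul_sqrt c d hc, h, (mul_sqrt' e (c*d) he)]

lemma sqrt_prod_eq2 (a b c e : ℝ) (ha : 0 ≤ a) (he : 0 ≤ e)
    (h : a * b = e^2 * c) : Real.sqrt a * Real.sqrt b = e * Real.sqrt c := by
  rw [sqrt_mul_sqrt a b ha, h, ← mul_sqrt' e c he]

lemma sqrt_absorb (a b : ℝ) (ha : 0 ≤ a) :
    Real.sqrt a * Real.sqrt (a * b) = a * Real.sqrt b := by
  rw [Real.sqrt_mul ha, ← mul_assoc, Real.mul_self_sqrt ha]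

variable {n : ℕ}

lemma Smat_zero {i k : Fin n} (h1 : (i:ℕ) ≠ k) (h2 : (i:ℕ)+1 ≠ k) : Smat n i k = 0 := by
  simp [Smat, h1, h2]

lemma Smat_diag {i k : Fin n} (h : (i:ℕ) = k) (h2 : (i:ℕ)+1 < n) :
    Smat n i k = Real.sqrt (2*n - (i:ℕ) - 1) := by
  have h2' : (k:ℕ)+1 < n := by omega
  simp [Smat, h, h2']

lemma Smat_diag_last {i k : Fin n} (h : (i:ℕ) = k) (h2 : ¬ ((i:ℕ)+1 < n)) :
    Smat n i k = Real.sqrt (2*n) := by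
  have h2' : ¬ ((k:ℕ)+1 < n) := by omega
  simp [Smat, h, h2']

lemma Smat_super {i k : Fin n} (h : (i:ℕ)+1 = k) :
    Smat n i k = -Real.sqrt ((i:ℕ) + 1) := by
  have : (i:ℕ) ≠ (k:ℕ) := by omega
  simp [Smat, h, this]

lemma Dsub_diag {i k : Fin n} (h : (i:ℕ) = k) (h2 : (i:ℕ)+1 < n) :
    Dsub n i k = (2*(n:ℝ)-1)/2 := by
  have h2' : (k:ℕ)+1 < n := by omega
  simp [Dsub, h, h2']

lemma Dsub_diag_last {i k : Fin n} (h : (i:ℕ) = k) (h2 : ¬ ((i:ℕ)+1 < n)) :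
    Dsub n i k = ((n:ℝ)-1)/2 := by
  have h2' : ¬ ((k:ℕ)+1 < n) := by omega
  simp [Dsub, h, h2']

lemma Dsub_super {i k : Fin n} (h : (i:ℕ)+1 = k) :
    Dsub n i k = (1/2) * Real.sqrt (((i:ℕ)+1) * (2*n - (i:ℕ) - 1)) := by
  have h' : (i:ℕ) ≠ (k:ℕ) := by omega
  simp [Dsub, h, h']

lemma Dsub_sub {i k : Fin n} (h : (k:ℕ)+1 = i) :
    Dsub n i k = (1/2) * Real.sqrt (((k:ℕ)+1) * (2*n - (k:ℕ) - 1)) := by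
  have h1 : (i:ℕ) ≠ (k:ℕ) := by omega
  have h2 : ¬ ((i:ℕ)+1 = (k:ℕ)) := by omega
  simp [Dsub, h, h1, h2]

lemma Dsub_zero {i k : Fin n} (h1 : (i:ℕ) ≠ k) (h2 : (i:ℕ)+1 ≠ k) (h3 : (k:ℕ)+1 ≠ i) :
    Dsub n i k = 0 := by simp [Dsub, h1, h2, h3]

lemma Amat_diag {i k : Fin n} (h : (i:ℕ) = k) : Amat n i k = (n:ℝ) - 1 := by
  simp [Amat, h]

lemma Amat_super {i k : Fin n} (h : (i:ℕ)+1 = k) : Amat n i k = offA n ((i:ℕ)+1) := by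
  have h' : (i:ℕ) ≠ (k:ℕ) := by omega
  simp [Amat, h, h']

lemma Amat_sub {i k : Fin n} (h : (k:ℕ)+1 = i) : Amat n i k = offA n ((k:ℕ)+1) := by
  have h1 : (i:ℕ) ≠ (k:ℕ) := by omega
  have h2 : ¬ ((i:ℕ)+1 = (k:ℕ)) := by omega
  simp [Amat, h, h1, h2]

lemma Amat_zero {i k : Fin n} (h1 : (i:ℕ) ≠ k) (h2 : (i:ℕ)+1 ≠ k) (h3 : (k:ℕ)+1 ≠ i) :
    Amat n i k = 0 := by simp [Amat, h1, h2, h3]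

lemma offA_generic {k : ℕ} (h : k ≠ n - 1) :
    offA n k = (1/2) * Real.sqrt (k * (2*n - (k:ℝ) - 1)) := by
  simp [offA, h]

lemma offA_special : offA n (n-1) = Real.sqrt (n * ((n:ℝ) - 1) / 2) := by
  simp [offA]

end Helpers

theorem stmt_6 (n : ℕ) (hn : 2 ≤ n) :
    Smat n * Dsub n = Amat n * Smat n ∧ IsUnit (Smat n) := by
  have hnR : (2:ℝ) ≤ (n:ℝ) := by exact_mod_cast hn
  constructor
  · ext i j
    rw [Matrix.mul_apply, Matrix.mul_apply]
    have hL : (∑ k, Smat n i k * Dsub n k j) =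
        Smat n i i * Dsub n i j +
          (if h : (i:ℕ)+1 < n then Smat n i ⟨(i:ℕ)+1, h⟩ * Dsub n ⟨(i:ℕ)+1, h⟩ j else 0) := by
      split_ifs with h
      · refine sum_two' _ i ⟨(i:ℕ)+1, h⟩ (by simp [Fin.ext_iff]) ?_
        intro k hk1 hk2
        have h1 : (k:ℕ) ≠ i := fun e => hk1 (Fin.ext e)
        have h2 : (k:ℕ) ≠ (i:ℕ)+1 := fun e => hk2 (Fin.ext e)
        rw [Smat_zero (by omega) (by omega), zero_mul]
      · rw [add_zero]
        refine sum_one' _ i ?_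
        intro k hk
        have h1 : (k:ℕ) ≠ i := fun e => hk (Fin.ext e)
        have h2 : (k:ℕ) < n := k.isLt
        rw [Smat_zero (by omega) (by omega), zero_mul]
    have hR : (∑ k, Amat n i k * Smat n k j) =
        (if h : 0 < (j:ℕ) then
          Amat n i ⟨(j:ℕ)-1, Nat.lt_of_le_of_lt (Nat.sub_le _ _) j.isLt⟩ *
            Smat n ⟨(j:ℕ)-1, Nat.lt_of_le_of_lt (Nat.sub_le _ _) j.isLt⟩ j else 0) +
          Amat n i j * Smat n j j := by
      split_ifs with h
      · rw [add_comm]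
        refine sum_two' _ j ⟨(j:ℕ)-1, _⟩ (by simp [Fin.ext_iff]; omega) ?_
        intro k hk1 hk2
        have h1 : (k:ℕ) ≠ j := fun e => hk1 (Fin.ext e)
        have h2 : (k:ℕ) ≠ (j:ℕ)-1 := fun e => hk2 (Fin.ext e)
        rw [Smat_zero (by omega) (by omega), mul_zero]
      · rw [zero_add]
        refine sum_one' _ j ?_
        intro k hk
        have h1 : (k:ℕ) ≠ j := fun e => hk (Fin.ext e)
        rw [Smat_zero (by omega) (by omega), mul_zero]
    rw [hL, hR]
    have hin : (i:ℕ) < n := i.isLt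
    have hjn : (j:ℕ) < n := j.isLt
    rcases (by omega :
        (j:ℕ)+1 = i ∨ (j:ℕ) = i ∨ (j:ℕ) = (i:ℕ)+1 ∨ (j:ℕ) = (i:ℕ)+2 ∨
          ((j:ℕ)+1 < i ∨ (i:ℕ)+3 ≤ j)) with hc | hc | hc | hc | hc
    · -- subdiagonal: j + 1 = i
      have hcR : ((i:ℕ):ℝ) = ((j:ℕ):ℝ)+1 := by exact_mod_cast hc.symm
      rw [Dsub_sub hc, Amat_sub hc]
      have hd : (if h : (i:ℕ)+1 < n then Smat n i ⟨(i:ℕ)+1,h⟩ * Dsub n ⟨(i:ℕ)+1,h⟩ j else 0) = 0 := by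
        split_ifs with h
        · rw [Dsub_zero (by simp; omega) (by simp; omega) (by simp; omega), mul_zero]
        · rfl
      have ha : (if h : 0 < (j:ℕ) then
          Amat n i ⟨(j:ℕ)-1, Nat.lt_of_le_of_lt (Nat.sub_le _ _) j.isLt⟩ *
            Smat n ⟨(j:ℕ)-1, Nat.lt_of_le_of_lt (Nat.sub_le _ _) j.isLt⟩ j else 0) = 0 := by
        split_ifs with h
        · rw [Amat_zero (by simp; omega) (by simp; omega) (by simp; omega), zero_mul]
        · rfl
      rw [hd, ha, add_zero, zero_add, Smat_diag rfl (show (j:ℕ)+1 < n by omega)]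
      by_cases hi2 : (i:ℕ)+1 < n
      · rw [Smat_diag rfl hi2, offA_generic (by omega)]
        push_cast
        rw [hcR]
        have hb1 : ((j:ℕ):ℝ) + 1 ≤ n := by exact_mod_cast hjn
        have h0 : (0:ℝ) ≤ 2*(n:ℝ) - (((j:ℕ):ℝ)+1) - 1 := by linarith
        linarith [sqrt_prod_eq' (2*(n:ℝ) - (((j:ℕ):ℝ)+1) - 1) ((((j:ℕ):ℝ)+1) * (2*(n:ℝ) - ((j:ℕ):ℝ) - 1))
          ((((j:ℕ):ℝ)+1) * (2*(n:ℝ) - (((j:ℕ):ℝ)+1) - 1)) (2*(n:ℝ) - ((j:ℕ):ℝ) - 1) 1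
          h0 (mul_nonneg (by linarith) h0) (by norm_num) (by ring)]
      · rw [Smat_diag_last rfl hi2, show (j:ℕ)+1 = n-1 from by omega, offA_special]
        have hj2 : (j:ℕ)+2 = n := by omega
        have hxR : ((j:ℕ):ℝ) = (n:ℝ)-2 := by
          have := congrArg (Nat.cast : ℕ → ℝ) hj2; push_cast at this; linarith
        rw [hxR]
        have hc0 : (0:ℝ) ≤ (n:ℝ) * ((n:ℝ)-1) / 2 :=
          div_nonneg (mul_nonneg (by linarith) (by linarith)) (by norm_num)
        linarith [sqrt_prod_eq' (2*(n:ℝ)) ((((n:ℝ)-2)+1) * (2*(n:ℝ) - ((n:ℝ)-2) - 1))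
          ((n:ℝ) * ((n:ℝ)-1) / 2) (2*(n:ℝ) - ((n:ℝ)-2) - 1) 2
          (by linarith) hc0 (by norm_num) (by ring)]
    · -- diagonal
      have hcR : ((j:ℕ):ℝ) = ((i:ℕ):ℝ) := by exact_mod_cast hc
      by_cases hj0 : 0 < (j:ℕ)
      · rw [dif_pos hj0,
          Amat_sub (i := i) (k := ⟨(j:ℕ)-1, Nat.lt_of_le_of_lt (Nat.sub_le _ _) j.isLt⟩)
            (by simp; omega),
          Smat_super (i := ⟨(j:ℕ)-1, Nat.lt_of_le_of_lt (Nat.sub_le _ _) j.isLt⟩) (k := j)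
            (by simp; omega),
          Amat_diag (i := i) (k := j) hc.symm]
        have hv : ((⟨(j:ℕ)-1, Nat.lt_of_le_of_lt (Nat.sub_le _ _) j.isLt⟩ : Fin n) : ℕ) = (j:ℕ)-1 := rfl
        rw [hv, show (j:ℕ)-1+1 = (j:ℕ) from by omega]
        have hv2 : (((j:ℕ)-1 : ℕ) : ℝ) + 1 = ((j:ℕ):ℝ) := by
          have : ((j:ℕ)-1) + 1 = (j:ℕ) := by omega
          exact_mod_cast congrArg (Nat.cast : ℕ → ℝ) this
        rw [hv2]
        by_cases hi2 : (i:ℕ)+1 < n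
        · rw [dif_pos hi2, Smat_diag (i := i) (k := i) rfl hi2,
            Dsub_diag (i := i) (k := j) hc.symm hi2,
            Smat_super (i := i) (k := ⟨(i:ℕ)+1, hi2⟩) rfl,
            Dsub_sub (i := ⟨(i:ℕ)+1, hi2⟩) (k := j) (by simp; omega),
            Smat_diag (i := j) (k := j) rfl (by omega), offA_generic (by omega)]
          rw [hcR]
          have hb1 : ((i:ℕ):ℝ) + 1 ≤ n := by exact_mod_cast hi2.le
          have h0 : (0:ℝ) ≤ 2*(n:ℝ) - ((i:ℕ):ℝ) - 1 := by linarith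
          have hx0 : (0:ℝ) ≤ ((i:ℕ):ℝ) := Nat.cast_nonneg _
          have k1 := sqrt_absorb (((i:ℕ):ℝ)+1) (2*(n:ℝ) - ((i:ℕ):ℝ) - 1) (by linarith)
          have k2 := sqrt_absorb ((i:ℕ):ℝ) (2*(n:ℝ) - ((i:ℕ):ℝ) - 1) hx0
          linear_combination (-(1/2) : ℝ) * k1 + (1/2 : ℝ) * k2
        · rw [dif_neg hi2, Smat_diag_last (i := i) (k := i) rfl hi2,
            Dsub_diag_last (i := i) (k := j) hc.symm hi2,
            Smat_diag_last (i := j) (k := j) rfl (by omega),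
            show (j:ℕ) = n-1 from by omega, offA_special,
            Nat.cast_sub (show 1 ≤ n by omega), Nat.cast_one]
          have hc0 : (0:ℝ) ≤ (n:ℝ) * ((n:ℝ)-1) / 2 :=
            div_nonneg (mul_nonneg (by linarith) (by linarith)) (by norm_num)
          have k := sqrt_prod_eq2 ((n:ℝ) * ((n:ℝ)-1) / 2) ((n:ℝ) - 1) (2*(n:ℝ))
            (((n:ℝ)-1)/2) hc0 (by linarith) (by ring)
          linear_combination k
      · -- j = i = 0
        rw [dif_neg hj0]
        have hi0 : (i:ℕ) = 0 := by omega
        have hi2 : (i:ℕ)+1 < n := by omega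
        rw [dif_pos hi2, Smat_diag (i := i) (k := i) rfl hi2,
          Dsub_diag (i := i) (k := j) hc.symm hi2,
          Smat_super (i := i) (k := ⟨(i:ℕ)+1, hi2⟩) rfl,
          Dsub_sub (i := ⟨(i:ℕ)+1, hi2⟩) (k := j) (by simp; omega),
          Amat_diag (i := i) (k := j) hc.symm,
          Smat_diag (i := j) (k := j) rfl (by omega)]
        have hi0R : ((i:ℕ):ℝ) = 0 := by exact_mod_cast hi0
        rw [hcR, hi0R]
        norm_num [Real.sqrt_one]
        ring
    · -- superdiagonal: j = i+1
      have hi2 : (i:ℕ)+1 < n := by omega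
      have hj0 : 0 < (j:ℕ) := by omega
      have hcR : ((j:ℕ):ℝ) = ((i:ℕ):ℝ) + 1 := by exact_mod_cast hc
      rw [dif_pos hi2, dif_pos hj0,
        Smat_diag (i := i) (k := i) rfl hi2,
        Dsub_super (i := i) (k := j) hc.symm,
        Smat_super (i := i) (k := ⟨(i:ℕ)+1, hi2⟩) rfl,
        Amat_diag (i := i) (k := ⟨(j:ℕ)-1, Nat.lt_of_le_of_lt (Nat.sub_le _ _) j.isLt⟩)
          (by simp; omega),
        Smat_super (i := ⟨(j:ℕ)-1, Nat.lt_of_le_of_lt (Nat.sub_le _ _) j.isLt⟩) (k := j)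
          (by simp; omega),
        Amat_super (i := i) (k := j) hc.symm]
      have hv : ((⟨(j:ℕ)-1, Nat.lt_of_le_of_lt (Nat.sub_le _ _) j.isLt⟩ : Fin n) : ℕ) = (j:ℕ)-1 := rfl
      rw [hv]
      have hv2 : (((j:ℕ)-1 : ℕ) : ℝ) + 1 = ((i:ℕ):ℝ) + 1 := by
        have : ((j:ℕ)-1) + 1 = (i:ℕ) + 1 := by omega
        exact_mod_cast congrArg (Nat.cast : ℕ → ℝ) this
      rw [hv2]
      by_cases hj2 : (j:ℕ)+1 < n
      · rw [Dsub_diag (i := ⟨(i:ℕ)+1, hi2⟩) (k := j) (by simp; omega) (by simp; omega),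
          Smat_diag (i := j) (k := j) rfl hj2, offA_generic (by omega)]
        push_cast
        rw [hcR]
        have hb2 : ((i:ℕ):ℝ) + 3 ≤ n := by
          have h3 : (i:ℕ)+3 ≤ n := by omega
          exact_mod_cast h3
        have k1 := sqrt_prod_eq2 (2*(n:ℝ) - ((i:ℕ):ℝ) - 1)
          ((((i:ℕ):ℝ)+1) * (2*(n:ℝ) - ((i:ℕ):ℝ) - 1)) (((i:ℕ):ℝ)+1) (2*(n:ℝ) - ((i:ℕ):ℝ) - 1)
          (by linarith) (by linarith) (by ring)
        have k2 := sqrt_prod_eq2 ((((i:ℕ):ℝ)+1) * (2*(n:ℝ) - (((i:ℕ):ℝ)+1) - 1))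
          (2*(n:ℝ) - (((i:ℕ):ℝ)+1) - 1) (((i:ℕ):ℝ)+1) (2*(n:ℝ) - (((i:ℕ):ℝ)+1) - 1)
          (mul_nonneg (by positivity) (by linarith)) (by linarith) (by ring)
        linear_combination (1/2 : ℝ) * k1 - (1/2 : ℝ) * k2
      · rw [Dsub_diag_last (i := ⟨(i:ℕ)+1, hi2⟩) (k := j) (by simp; omega) (by simp; omega),
          Smat_diag_last (i := j) (k := j) rfl hj2,
          show (i:ℕ)+1 = n-1 from by omega, offA_special]
        have hxR : ((i:ℕ):ℝ) = (n:ℝ)-2 := by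
          have h2 : (i:ℕ)+2 = n := by omega
          have := congrArg (Nat.cast : ℕ → ℝ) h2; push_cast at this; linarith
        rw [hxR]
        have hc0 : (0:ℝ) ≤ (n:ℝ) * ((n:ℝ)-1) / 2 :=
          div_nonneg (mul_nonneg (by linarith) (by linarith)) (by norm_num)
        have k1 := sqrt_prod_eq2 (2*(n:ℝ) - ((n:ℝ)-2) - 1)
          ((((n:ℝ)-2)+1) * (2*(n:ℝ) - ((n:ℝ)-2) - 1)) (((n:ℝ)-2)+1) (2*(n:ℝ) - ((n:ℝ)-2) - 1)
          (by linarith) (by linarith) (by ring)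
        have k2 := sqrt_prod_eq2 ((n:ℝ) * ((n:ℝ)-1) / 2) (2*(n:ℝ)) (((n:ℝ)-2)+1) (n:ℝ)
          hc0 (by linarith) (by ring)
        linear_combination (1/2 : ℝ) * k1 - k2
    · -- j = i + 2
      have hi2 : (i:ℕ)+1 < n := by omega
      have hj0 : 0 < (j:ℕ) := by omega
      have hcR : ((j:ℕ):ℝ) = ((i:ℕ):ℝ) + 2 := by exact_mod_cast hc
      rw [dif_pos hi2, dif_pos hj0,
        Dsub_zero (i := i) (k := j) (by omega) (by omega) (by omega),
        Smat_super (i := i) (k := ⟨(i:ℕ)+1, hi2⟩) rfl,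
        Dsub_super (i := ⟨(i:ℕ)+1, hi2⟩) (k := j) (by simp; omega),
        Amat_zero (i := i) (k := j) (by omega) (by omega) (by omega),
        Amat_super (i := i) (k := ⟨(j:ℕ)-1, Nat.lt_of_le_of_lt (Nat.sub_le _ _) j.isLt⟩)
          (by simp; omega),
        Smat_super (i := ⟨(j:ℕ)-1, Nat.lt_of_le_of_lt (Nat.sub_le _ _) j.isLt⟩) (k := j)
          (by simp; omega),
        offA_generic (by omega)]
      have hw : ((⟨(i:ℕ)+1, hi2⟩ : Fin n) : ℕ) = (i:ℕ)+1 := rfl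
      have hv : ((⟨(j:ℕ)-1, Nat.lt_of_le_of_lt (Nat.sub_le _ _) j.isLt⟩ : Fin n) : ℕ) = (j:ℕ)-1 := rfl
      rw [hw, hv]
      have hv2 : (((j:ℕ)-1 : ℕ) : ℝ) + 1 = ((i:ℕ):ℝ) + 2 := by
        have : ((j:ℕ)-1) + 1 = (i:ℕ) + 2 := by omega
        exact_mod_cast congrArg (Nat.cast : ℕ → ℝ) this
      rw [hv2]
      push_cast
      have hb3 : ((i:ℕ):ℝ) + 3 ≤ n := by
        have h3 : (i:ℕ)+3 ≤ n := by omega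
        exact_mod_cast h3
      have k1 := sqrt_prod_eq' (((i:ℕ):ℝ)+1) ((((i:ℕ):ℝ)+1+1) * (2*(n:ℝ) - (((i:ℕ):ℝ)+1) - 1))
        ((((i:ℕ):ℝ)+1) * (2*(n:ℝ) - (((i:ℕ):ℝ)+1) - 1)) (((i:ℕ):ℝ)+2) 1
        (by positivity) (mul_nonneg (by positivity) (by linarith)) (by norm_num) (by ring)
      linear_combination (-(1/2) : ℝ) * k1
    · -- far entries: everything vanishes
      have hz1 : Dsub n i j = 0 := Dsub_zero (by omega) (by omega) (by omega)
      have hz2 : Amat n i j = 0 := Amat_zero (by omega) (by omega) (by omega)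
      rw [hz1, hz2, mul_zero, zero_mul, zero_add, add_zero]
      split_ifs with h1 h2
      · rw [Dsub_zero (by simp; omega) (by simp; omega) (by simp; omega), mul_zero,
          Amat_zero (by simp; omega) (by simp; omega) (by simp; omega), zero_mul]
      · rw [Dsub_zero (by simp; omega) (by simp; omega) (by simp; omega), mul_zero]
      · rw [Amat_zero (by simp; omega) (by simp; omega) (by simp; omega), zero_mul]
      · rfl
  · -- invertibility
    have hBT : (Smat n).BlockTriangular id := by
      intro p q hpq
      have : (q:ℕ) < (p:ℕ) := hpq
      exact Smat_zero (by omega) (by omega)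
    have hdet : (Smat n).det = ∏ i, Smat n i i := Matrix.det_of_upperTriangular hBT
    have hpos : ∀ i : Fin n, 0 < Smat n i i := by
      intro i
      by_cases h : (i:ℕ)+1 < n
      · rw [Smat_diag rfl h]
        apply Real.sqrt_pos.2
        have h1 : ((i:ℕ):ℝ) + 1 ≤ (n:ℝ) := by exact_mod_cast h.le
        linarith
      · rw [Smat_diag_last rfl h]
        apply Real.sqrt_pos.2
        linarith
    refine (Matrix.isUnit_iff_isUnit_det _).2 (isUnit_iff_ne_zero.2 ?_)
    rw [hdet]
    exact ne_of_gt (Finset.prod_pos fun i _ => hpos i)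
end

section
/- For α > 0 and n ≥ 2, define m_{n−i} = 2α²·(n+i−1)!(n−i−1)!/((n−1)!)² for i = 1,…,n−1 and m_n = α². Then the vector u with u_j = √(m_j) satisfies B(n)u = (m_1^{−1/2}k_1, 0, …, 0)ᵀ, where k_1 = α²(2n−1)!/((n−1)!)² and B(n) is the symmetric tridiagonal matrix with diagonal entries n, superdiagonal −(1/2)√(i(2n−i−1)) for i=1,…,n−2, and −√(n(n−1)/2) in position (n−1,n). -/
/-- The matrix `B(n) = A(n) + I` with negative off-diagonal signs: diagonal `n`,
off-diagonal `-offA n k` at (1-indexed) position `(k, k+1)`. -/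
noncomputable def Bmat (n : ℕ) : Matrix (Fin n) (Fin n) ℝ :=
  Matrix.of fun i j =>
    if (i : ℕ) = (j : ℕ) then (n : ℝ)
    else if (i : ℕ) + 1 = (j : ℕ) then -offA n ((i : ℕ) + 1)
    else if (j : ℕ) + 1 = (i : ℕ) then -offA n ((j : ℕ) + 1)
    else 0

/-- The masses: `m_j = 2α² (2n-j-1)! (j-1)! / ((n-1)!)²` for `1 ≤ j ≤ n-1`
(i.e. `m_{n-i} = 2α² (n+i-1)! (n-i-1)! / ((n-1)!)²` for `i ≥ 1`) and `m_n = α²`. -/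
noncomputable def massVal (n j : ℕ) (α : ℝ) : ℝ :=
  if j = n then α ^ 2
  else 2 * α ^ 2 * (Nat.factorial (2 * n - j - 1)) * (Nat.factorial (j - 1))
    / ((Nat.factorial (n - 1)) : ℝ) ^ 2

lemma key {x y z r s : ℝ} (hx : 0 ≤ x) (hs : 0 ≤ s) (hr : 0 ≤ r)
    (h : s^2 * (x * y) = r^2 * z) :
    s * (Real.sqrt x * Real.sqrt y) = r * Real.sqrt z := by
  rw [← Real.sqrt_mul hx y]
  have h1 : s * Real.sqrt (x*y) = Real.sqrt (s^2 * (x*y)) := by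
    rw [Real.sqrt_mul (sq_nonneg s), Real.sqrt_sq hs]
  have h2 : r * Real.sqrt z = Real.sqrt (r^2 * z) := by
    rw [Real.sqrt_mul (sq_nonneg r), Real.sqrt_sq hr]
  rw [h1, h2, h]

lemma fact_ne (m : ℕ) : ((Nat.factorial m : ℝ)) ≠ 0 := by
  exact_mod_cast Nat.factorial_ne_zero m

lemma up_mid (n J : ℕ) (α : ℝ) (hα : 0 ≤ α) (hn : 2 ≤ n) (hJ1 : 1 ≤ J) (hJ2 : J ≤ n - 2) :
    offA n J * Real.sqrt (massVal n (J+1) α) = (J:ℝ)/2 * Real.sqrt (massVal n J α) := by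
  obtain ⟨b, rfl⟩ : ∃ b, J = b + 1 := ⟨J - 1, by omega⟩
  obtain ⟨a, ha⟩ : ∃ a, 2*n - (b+1) - 1 = a + 1 := ⟨2*n - (b+1) - 2, by omega⟩
  have h2n : 2*n = a + b + 3 := by omega
  have e1 : 2*n - (b+1+1) - 1 = a := by omega
  have e2 : (b+1+1) - 1 = b+1 := by omega
  have e3 : (b+1) - 1 = b := by omega
  have hne1 : b+1+1 ≠ n := by omega
  have hne2 : b+1 ≠ n := by omega
  have hne3 : b+1 ≠ n - 1 := by omega
  rw [offA, if_neg hne3, massVal, if_neg hne1, massVal, if_neg hne2, ha, e1, e2, e3]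
  have hx : ((b:ℝ)+1) * (2 * (n:ℝ) - ((b:ℝ)+1) - 1) = ((b+1 : ℕ):ℝ) * ((a+1 : ℕ):ℝ) := by
    have h' : (2 * (n:ℝ)) = (a:ℝ) + b + 3 := by exact_mod_cast h2n
    push_cast
    rw [h']; ring
  push_cast at hx ⊢
  rw [hx, mul_assoc]
  apply key (by positivity) (by norm_num) (by positivity)
  have hf : ((Nat.factorial (n-1) : ℝ)) ≠ 0 := fact_ne _
  field_simp
  push_cast [Nat.factorial_succ]
  ring

lemma down_mid (n K : ℕ) (α : ℝ) (hn : 2 ≤ n) (hK1 : 1 ≤ K) (hK2 : K ≤ n - 2) :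
    offA n K * Real.sqrt (massVal n K α)
      = (2*(n:ℝ) - (K:ℝ) - 1)/2 * Real.sqrt (massVal n (K+1) α) := by
  obtain ⟨b, rfl⟩ : ∃ b, K = b + 1 := ⟨K - 1, by omega⟩
  obtain ⟨a, ha⟩ : ∃ a, 2*n - (b+1) - 1 = a + 1 := ⟨2*n - (b+1) - 2, by omega⟩
  have h2n : 2*n = a + b + 3 := by omega
  have h2n' : (2 * (n:ℝ)) = (a:ℝ) + b + 3 := by exact_mod_cast h2n
  have e1 : 2*n - (b+1+1) - 1 = a := by omega
  have e2 : (b+1+1) - 1 = b+1 := by omega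
  have e3 : (b+1) - 1 = b := by omega
  have hne1 : b+1+1 ≠ n := by omega
  have hne2 : b+1 ≠ n := by omega
  have hne3 : b+1 ≠ n - 1 := by omega
  rw [offA, if_neg hne3, massVal, if_neg hne2, massVal, if_neg hne1, ha, e1, e2, e3]
  have hx : ((b:ℝ)+1) * (2 * (n:ℝ) - ((b:ℝ)+1) - 1) = ((b:ℝ)+1) * ((a:ℝ)+1) := by
    rw [h2n']; ring
  push_cast
  rw [hx, mul_assoc, h2n']
  rw [show ((a:ℝ) + b + 3 - (b+1) - 1)/2 = ((a:ℝ)+1)/2 by ring]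
  apply key (by positivity) (by norm_num) (by positivity)
  have hf : ((Nat.factorial (n-1) : ℝ)) ≠ 0 := fact_ne _
  field_simp
  push_cast [Nat.factorial_succ]
  ring

lemma up_last (n : ℕ) (α : ℝ) (hα : 0 ≤ α) (hn : 2 ≤ n) :
    offA n (n-1) * Real.sqrt (massVal n n α)
      = ((n:ℝ)-1)/2 * Real.sqrt (massVal n (n-1) α) := by
  obtain ⟨m, rfl⟩ : ∃ m, n = m + 2 := ⟨n - 2, by omega⟩
  have e0 : m + 2 - 1 = m + 1 := by omega
  have e1 : 2*(m+2) - (m+1) - 1 = m + 2 := by omega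
  have e2 : (m+1) - 1 = m := by omega
  have hne : m+1 ≠ m+2 := by omega
  rw [offA, if_pos rfl, e0, massVal, if_pos rfl, massVal, if_neg hne, e1, e2]
  push_cast
  rw [show ((m:ℝ)+2)*((m:ℝ)+2-1)/2 = (((m:ℝ)+2)*((m:ℝ)+1))/2 by ring]
  rw [show ((m:ℝ)+2-1)/2 = ((m:ℝ)+1)/2 by ring]
  rw [show Real.sqrt ((((m:ℝ)+2)*((m:ℝ)+1))/2) * Real.sqrt (α^2)
      = 1 * (Real.sqrt ((((m:ℝ)+2)*((m:ℝ)+1))/2) * Real.sqrt (α^2)) from (one_mul _).symm]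
  apply key (by positivity) (by norm_num) (by positivity)
  have hf : ((Nat.factorial (m+1) : ℝ)) ≠ 0 := fact_ne _
  field_simp
  push_cast [Nat.factorial_succ]
  ring

lemma row_n (n : ℕ) (α : ℝ) (hα : 0 ≤ α) (hn : 2 ≤ n) :
    offA n (n-1) * Real.sqrt (massVal n (n-1) α)
      = (n:ℝ) * Real.sqrt (massVal n n α) := by
  obtain ⟨m, rfl⟩ : ∃ m, n = m + 2 := ⟨n - 2, by omega⟩
  have e0 : m + 2 - 1 = m + 1 := by omega
  have e1 : 2*(m+2) - (m+1) - 1 = m + 2 := by omega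
  have e2 : (m+1) - 1 = m := by omega
  have hne : m+1 ≠ m+2 := by omega
  rw [offA, if_pos rfl, e0, massVal, if_neg hne, e1, e2, massVal, if_pos rfl]
  push_cast
  rw [show ((m:ℝ)+2)*((m:ℝ)+2-1)/2 = (((m:ℝ)+2)*((m:ℝ)+1))/2 by ring]
  rw [show Real.sqrt ((((m:ℝ)+2)*((m:ℝ)+1))/2) * Real.sqrt (2 * α ^ 2 * ((m:ℕ)+2).factorial * (m:ℕ).factorial / (((m:ℕ)+1).factorial:ℝ) ^ 2)
      = 1 * (Real.sqrt ((((m:ℝ)+2)*((m:ℝ)+1))/2) * Real.sqrt (2 * α ^ 2 * ((m:ℕ)+2).factorial * (m:ℕ).factorial / (((m:ℕ)+1).factorial:ℝ) ^ 2)) from (one_mul _).symm]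
  apply key (by positivity) (by norm_num) (by positivity)
  have hf : ((Nat.factorial (m+1) : ℝ)) ≠ 0 := fact_ne _
  field_simp
  push_cast [Nat.factorial_succ]
  ring

lemma up (n J : ℕ) (α : ℝ) (hα : 0 ≤ α) (hn : 2 ≤ n) (hJ1 : 1 ≤ J) (hJ2 : J ≤ n - 1) :
    offA n J * Real.sqrt (massVal n (J+1) α) = (J:ℝ)/2 * Real.sqrt (massVal n J α) := by
  by_cases hJ : J = n - 1
  · subst hJ
    rw [show n - 1 + 1 = n from by omega]
    rw [up_last n α hα hn]
    congr 1
    rw [Nat.cast_sub (by omega)]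
    push_cast; ring
  · exact up_mid n J α hα hn hJ1 (by omega)

lemma massVal_nonneg (n j : ℕ) (α : ℝ) : 0 ≤ massVal n j α := by
  rw [massVal]
  split <;> positivity

lemma kone (n : ℕ) (hn : 2 ≤ n) (α : ℝ) :
    α ^ 2 * (Nat.factorial (2*n-1)) / ((Nat.factorial (n-1)):ℝ)^2
      = ((n:ℝ) - 1/2) * (2 * α ^ 2 * (Nat.factorial (2*n-1-1)) * (Nat.factorial (1-1))
          / ((Nat.factorial (n-1)):ℝ)^2) := by
  obtain ⟨m, rfl⟩ : ∃ m, n = m + 2 := ⟨n - 2, by omega⟩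
  rw [show 2*(m+2)-1 = 2*m+3 from by omega, show 2*m+3-1 = 2*m+2 from by omega,
    show (m+2)-1 = m+1 from by omega, show (1:ℕ)-1 = 0 from rfl]
  have hfs : Nat.factorial (2*m+3) = (2*m+3) * Nat.factorial (2*m+2) := Nat.factorial_succ _
  have hf := fact_ne (m+1)
  rw [hfs, Nat.factorial_zero]
  field_simp
  push_cast
  ring

lemma Bmat_zero (n : ℕ) (j i : Fin n) (h1 : (j:ℕ) ≠ (i:ℕ)) (h2 : (j:ℕ)+1 ≠ (i:ℕ))
    (h3 : (i:ℕ)+1 ≠ (j:ℕ)) : Bmat n j i = 0 := by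
  simp only [Bmat, Matrix.of_apply]
  rw [if_neg h1, if_neg h2, if_neg h3]

lemma Bmat_diag (n : ℕ) (j : Fin n) : Bmat n j j = (n:ℝ) := by
  simp [Bmat]

lemma Bmat_left (n : ℕ) (j i : Fin n) (h1 : (i:ℕ)+1 = (j:ℕ)) :
    Bmat n j i = -offA n ((i:ℕ)+1) := by
  simp only [Bmat, Matrix.of_apply]
  rw [if_neg (by omega), if_neg (by omega), if_pos h1]

lemma Bmat_right (n : ℕ) (j i : Fin n) (h1 : (j:ℕ)+1 = (i:ℕ)) :
    Bmat n j i = -offA n ((j:ℕ)+1) := by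
  simp only [Bmat, Matrix.of_apply]
  rw [if_neg (by omega), if_pos h1]

theorem stmt_16 (n : ℕ) (hn : 2 ≤ n) (α : ℝ) (hα : 0 < α) :
    (Bmat n).mulVec (fun j => Real.sqrt (massVal n ((j : ℕ) + 1) α)) =
      fun (j : Fin n) => if (j : ℕ) = 0 then
          (α ^ 2 * (Nat.factorial (2 * n - 1)) / ((Nat.factorial (n - 1)) : ℝ) ^ 2)
            / Real.sqrt (massVal n 1 α)
        else 0 := by
  funext j
  simp only [Matrix.mulVec, dotProduct]
  set u : Fin n → ℝ := fun i => Real.sqrt (massVal n ((i:ℕ)+1) α) with hu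
  set k := (j:ℕ) with hk
  have hkn : k < n := j.isLt
  by_cases h0 : k = 0
  · -- first row
    rw [if_pos h0]
    have hlt1 : (1:ℕ) < n := by omega
    have hsum : ∑ i, Bmat n j i * u i = Bmat n j j * u j + Bmat n j ⟨1, hlt1⟩ * u ⟨1, hlt1⟩ := by
      have hne : j ≠ (⟨1, hlt1⟩ : Fin n) := by
        simp only [ne_eq, Fin.ext_iff]; omega
      have hz : ∀ i ∈ (Finset.univ : Finset (Fin n)),
          i ∉ ({j, ⟨1, hlt1⟩} : Finset (Fin n)) → Bmat n j i * u i = 0 := by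
        intro i _ hi
        simp only [Finset.mem_insert, Finset.mem_singleton] at hi
        push_neg at hi
        obtain ⟨ha, hb⟩ := hi
        have ha' : (i:ℕ) ≠ (j:ℕ) := fun h => ha (Fin.ext h)
        have hb' : (i:ℕ) ≠ 1 := fun h => hb (Fin.ext h)
        rw [Bmat_zero n j i (by omega) (by omega) (by omega), zero_mul]
      rw [← Finset.sum_subset (Finset.subset_univ _) hz, Finset.sum_pair hne]
    rw [hsum, Bmat_diag, Bmat_right n j ⟨1, hlt1⟩ (by simp; omega)]
    have hup := up n 1 α hα.le hn le_rfl (by omega)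
    have hju : u j = Real.sqrt (massVal n 1 α) := by rw [hu]; simp only []; rw [← hk, h0]
    have h3u : u ⟨1, hlt1⟩ = Real.sqrt (massVal n (1+1) α) := rfl
    rw [hju, h3u, ← hk, h0]
    rw [neg_mul, hup]
    have hm1 : 0 < massVal n 1 α := by
      rw [massVal, if_neg (by omega)]
      have := Nat.factorial_pos (2*n-1-1)
      have := Nat.factorial_pos (1-1)
      have := Nat.factorial_pos (n-1)
      positivity
    have hgpos : 0 < Real.sqrt (massVal n 1 α) := Real.sqrt_pos.mpr hm1
    rw [eq_div_iff hgpos.ne']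
    have hg : Real.sqrt (massVal n 1 α) * Real.sqrt (massVal n 1 α) = massVal n 1 α :=
      Real.mul_self_sqrt hm1.le
    rw [show ((n:ℝ) * Real.sqrt (massVal n 1 α) + -((1:ℕ)/2 * Real.sqrt (massVal n 1 α)))
          * Real.sqrt (massVal n 1 α)
        = ((n:ℝ) - 1/2) * (Real.sqrt (massVal n 1 α) * Real.sqrt (massVal n 1 α)) from by
      push_cast; ring]
    rw [hg, massVal, if_neg (by omega)]
    exact (kone n hn α).symm
  · rw [if_neg h0]
    by_cases hlast : k = n - 1
    · -- last row
      have hlt1 : n - 2 < n := by omega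
      have hsum : ∑ i, Bmat n j i * u i
          = Bmat n j ⟨n-2, hlt1⟩ * u ⟨n-2, hlt1⟩ + Bmat n j j * u j := by
        have hne : (⟨n-2, hlt1⟩ : Fin n) ≠ j := by
          simp only [ne_eq, Fin.ext_iff]; omega
        have hz : ∀ i ∈ (Finset.univ : Finset (Fin n)),
            i ∉ ({⟨n-2, hlt1⟩, j} : Finset (Fin n)) → Bmat n j i * u i = 0 := by
          intro i _ hi
          simp only [Finset.mem_insert, Finset.mem_singleton] at hi
          push_neg at hi
          obtain ⟨ha, hb⟩ := hi
          have ha' : (i:ℕ) ≠ n-2 := fun h => ha (Fin.ext h)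
          have hb' : (i:ℕ) ≠ (j:ℕ) := fun h => hb (Fin.ext h)
          rw [Bmat_zero n j i (by omega) (by omega) (by omega), zero_mul]
        rw [← Finset.sum_subset (Finset.subset_univ _) hz, Finset.sum_pair hne]
      rw [hsum, Bmat_diag, Bmat_left n j ⟨n-2, hlt1⟩ (by simp; omega)]
      have h1u : u ⟨n-2, hlt1⟩ = Real.sqrt (massVal n (n-1) α) := by
        rw [hu]; simp only []; congr 2; omega
      have hju : u j = Real.sqrt (massVal n n α) := by
        rw [hu]; simp only []; rw [← hk]; congr 2; omega
      rw [h1u, hju, show ((⟨n-2, hlt1⟩ : Fin n) : ℕ) + 1 = n - 1 from by simp; omega]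
      have hrow := row_n n α hα.le hn
      rw [neg_mul, hrow]
      ring
    · -- middle row
      have h1 : 1 ≤ k := by omega
      have h2 : k ≤ n - 2 := by omega
      have hlt1 : k - 1 < n := by omega
      have hlt3 : k + 1 < n := by omega
      have hsum : ∑ i, Bmat n j i * u i
          = Bmat n j ⟨k-1, hlt1⟩ * u ⟨k-1, hlt1⟩
            + (Bmat n j j * u j + Bmat n j ⟨k+1, hlt3⟩ * u ⟨k+1, hlt3⟩) := by
        have hne : j ≠ (⟨k+1, hlt3⟩ : Fin n) := by
          simp only [ne_eq, Fin.ext_iff]; omega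
        have hnotmem : (⟨k-1, hlt1⟩ : Fin n) ∉ ({j, ⟨k+1, hlt3⟩} : Finset (Fin n)) := by
          simp only [Finset.mem_insert, Finset.mem_singleton, Fin.ext_iff]
          push_neg
          constructor <;> simp <;> omega
        have hz : ∀ i ∈ (Finset.univ : Finset (Fin n)),
            i ∉ ({⟨k-1, hlt1⟩, j, ⟨k+1, hlt3⟩} : Finset (Fin n)) → Bmat n j i * u i = 0 := by
          intro i _ hi
          simp only [Finset.mem_insert, Finset.mem_singleton] at hi
          push_neg at hi
          obtain ⟨ha, hb, hc⟩ := hi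
          have ha' : (i:ℕ) ≠ k-1 := fun h => ha (Fin.ext h)
          have hb' : (i:ℕ) ≠ (j:ℕ) := fun h => hb (Fin.ext h)
          have hc' : (i:ℕ) ≠ k+1 := fun h => hc (Fin.ext h)
          rw [Bmat_zero n j i (by omega) (by omega) (by omega), zero_mul]
        rw [← Finset.sum_subset (Finset.subset_univ _) hz, Finset.sum_insert hnotmem,
          Finset.sum_pair hne]
      rw [hsum, Bmat_diag, Bmat_left n j ⟨k-1, hlt1⟩ (by simp; omega),
        Bmat_right n j ⟨k+1, hlt3⟩ (by simp [hk])]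
      have h1u : u ⟨k-1, hlt1⟩ = Real.sqrt (massVal n k α) := by
        rw [hu]; simp only []; congr 2; omega
      have hju : u j = Real.sqrt (massVal n (k+1) α) := rfl
      have h3u : u ⟨k+1, hlt3⟩ = Real.sqrt (massVal n ((k+1)+1) α) := rfl
      rw [h1u, hju, h3u, show ((⟨k-1, hlt1⟩ : Fin n) : ℕ) + 1 = k from by simp; omega, ← hk]
      have hdown := down_mid n k α hn h1 h2
      have hup := up n (k+1) α hα.le hn (by omega) (by omega)
      rw [neg_mul, hdown, neg_mul, hup]
      push_cast
      ring
end
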